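/- Let F_2 be the free group on two generators x and y. For every integer k ≥ 1, the set C_k = {x^i : 1 ≤ i ≤ k} ∪ {x^i y : 1 ≤ i ≤ k} ⊆ F_2 satisfies |C_k| = 2k and |C_k C_k^{-1}| = 2k^2 + 2k - 1. -/

import Mathlib

open scoped Pointwise

namespace Stmt13

abbrev G := FreeGroup (Fin 2)
def X : G := FreeGroup.of 0
def Y : G := FreeGroup.of 1

def xc : G →* Multiplicative ℤ :=
  FreeGroup.lift (fun i => Multiplicative.ofAdd (if i = 0 then (1:ℤ) else 0))
def yc : G →* Multiplicative ℤ :=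
  FreeGroup.lift (fun i => Multiplicative.ofAdd (if i = 1 then (1:ℤ) else 0))

@[simp] lemma xc_X : xc X = Multiplicative.ofAdd 1 := by simp [xc, X]
@[simp] lemma xc_Y : xc Y = 1 := by simp [xc, Y]
@[simp] lemma yc_X : yc X = 1 := by simp [yc, X]
@[simp] lemma yc_Y : yc Y = Multiplicative.ofAdd 1 := by simp [yc, Y]

lemma xc_zpow (m : ℤ) : xc (X ^ m) = Multiplicative.ofAdd m := by
  rw [map_zpow, xc_X, ← ofAdd_zsmul, smul_eq_mul, mul_one]

@[simp] lemma yc_zpow (m : ℤ) : yc (X ^ m) = 1 := by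
  rw [map_zpow, yc_X, one_zpow]

lemma zpow_inj {m n : ℤ} (h : X ^ m = X ^ n) : m = n := by
  have := congrArg xc h
  rw [xc_zpow, xc_zpow] at this
  exact Multiplicative.ofAdd.injective this

def π : G →* Equiv.Perm ℤ :=
  FreeGroup.lift (![Equiv.addRight 1, Equiv.swap 0 1])

@[simp] lemma π_X : π X = Equiv.addRight 1 := by simp [π, X]
@[simp] lemma π_Y : π Y = Equiv.swap 0 1 := by simp [π, Y]

lemma no_comm {m : ℤ} (h : X ^ m * Y = Y * X ^ m) : m = 0 := by
  have h2 := congrArg (fun g => π g 0) h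
  simp only [map_mul, map_zpow, π_X, π_Y, Equiv.Perm.mul_apply] at h2
  rw [Equiv.zsmul_addRight] at h2
  simp only [smul_eq_mul, mul_one, Equiv.coe_addRight] at h2
  by_contra hm
  rcases eq_or_ne m 1 with h1 | h1
  · subst h1; simp at h2
  · rw [Equiv.swap_apply_left, zero_add, Equiv.swap_apply_of_ne_of_ne hm h1] at h2
    omega

lemma conj_inj {a b c d : ℤ} (h : X ^ a * Y * (X ^ b)⁻¹ = X ^ c * Y * (X ^ d)⁻¹) :
    a = c ∧ b = d := by
  have h1 : X ^ (a - c) * Y * X ^ (d - b) = Y := by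
    calc X ^ (a - c) * Y * X ^ (d - b)
        = (X ^ c)⁻¹ * (X ^ a * Y * (X ^ b)⁻¹) * X ^ d := by group
      _ = (X ^ c)⁻¹ * (X ^ c * Y * (X ^ d)⁻¹) * X ^ d := by rw [h]
      _ = Y := by group
  have hm : (a - c) + (d - b) = 0 := by
    have h2 := congrArg xc h1
    simp only [map_mul, xc_zpow, xc_Y, mul_one] at h2
    rw [← ofAdd_add, show (1:Multiplicative ℤ) = Multiplicative.ofAdd 0 from rfl] at h2
    exact Multiplicative.ofAdd.injective h2
  have h3 : X ^ (a - c) * Y = Y * X ^ (a - c) := by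
    have hd : d - b = -(a - c) := by omega
    rw [hd] at h1
    calc X ^ (a - c) * Y
        = X ^ (a - c) * Y * X ^ (-(a - c)) * X ^ (a - c) := by group
      _ = Y * X ^ (a - c) := by rw [h1]
  have := no_comm h3
  constructor <;> omega

lemma conj_inj' {a b c d : ℤ} (h : X ^ a * Y⁻¹ * (X ^ b)⁻¹ = X ^ c * Y⁻¹ * (X ^ d)⁻¹) :
    a = c ∧ b = d := by
  have h2 : X ^ b * Y * (X ^ a)⁻¹ = X ^ d * Y * (X ^ c)⁻¹ := by
    have := congrArg (·⁻¹) h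
    simp only [mul_inv_rev, inv_inv] at this
    calc X ^ b * Y * (X ^ a)⁻¹ = X ^ b * (Y * (X ^ a)⁻¹) := by group
      _ = X ^ d * (Y * (X ^ c)⁻¹) := this
      _ = X ^ d * Y * (X ^ c)⁻¹ := by group
  obtain ⟨h4, h5⟩ := conj_inj h2
  exact ⟨h5, h4⟩

@[simp] lemma yc_B (a b : ℤ) : yc (X ^ a * Y * (X ^ b)⁻¹) = Multiplicative.ofAdd 1 := by
  simp

@[simp] lemma yc_D (a b : ℤ) : yc (X ^ a * Y⁻¹ * (X ^ b)⁻¹) = Multiplicative.ofAdd (-1) := by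
  simp [← ofAdd_neg]

lemma A_ne_B {m a b : ℤ} : X ^ m ≠ X ^ a * Y * (X ^ b)⁻¹ := by
  intro h
  have := congrArg yc h
  rw [yc_zpow, yc_B] at this
  exact (by decide : (1 : Multiplicative ℤ) ≠ Multiplicative.ofAdd 1) this

lemma A_ne_D {m a b : ℤ} : X ^ m ≠ X ^ a * Y⁻¹ * (X ^ b)⁻¹ := by
  intro h
  have := congrArg yc h
  rw [yc_zpow, yc_D] at this
  exact (by decide : (1 : Multiplicative ℤ) ≠ Multiplicative.ofAdd (-1)) this

lemma B_ne_D {a b c d : ℤ} : X ^ a * Y * (X ^ b)⁻¹ ≠ X ^ c * Y⁻¹ * (X ^ d)⁻¹ := by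
  intro h
  have := congrArg yc h
  rw [yc_B, yc_D] at this
  exact (by decide : (Multiplicative.ofAdd (1:ℤ)) ≠ Multiplicative.ofAdd (-1)) this

end Stmt13
theorem stmt_13 (k : ℕ) (hk : 1 ≤ k)
    (x y : FreeGroup (Fin 2)) (hx : x = FreeGroup.of 0) (hy : y = FreeGroup.of 1)
    (C : Finset (FreeGroup (Fin 2)))
    (hC : C = (Finset.Icc 1 k).image (fun i => x ^ i) ∪
              (Finset.Icc 1 k).image (fun i => x ^ i * y)) :
    C.card = 2 * k ∧ (C * C⁻¹).card = 2 * k ^ 2 + 2 * k - 1 := by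
  have hx' : x = Stmt13.X := hx
  have hy' : y = Stmt13.Y := hy
  subst hx' hy' hC
  clear hx hy
  open Stmt13 in
  -- injectivity of i ↦ X ^ i on ℕ
  have hnatinj : Function.Injective (fun i : ℕ => X ^ i) := by
    intro i j h
    have : ((i : ℤ)) = (j : ℤ) := zpow_inj (by rw [zpow_natCast, zpow_natCast]; exact h)
    exact_mod_cast this
  have ycnp : ∀ i : ℕ, yc (X ^ i) = 1 := by intro i; simp
  constructor
  · rw [Finset.card_union_of_disjoint, Finset.card_image_of_injective _ hnatinj,
      Finset.card_image_of_injective, Nat.card_Icc]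
    · omega
    · intro i j h
      exact hnatinj (mul_right_cancel h)
    · rw [Finset.disjoint_left]
      rintro g hg1 hg2
      obtain ⟨i, hi, rfl⟩ := Finset.mem_image.1 hg1
      obtain ⟨j, hj, hj2⟩ := Finset.mem_image.1 hg2
      have := congrArg yc hj2
      simp only [map_mul, ycnp, yc_Y, one_mul] at this
      exact (by decide : Multiplicative.ofAdd (1:ℤ) ≠ 1) this
  · set A : Finset G := (Finset.Icc (1-(k:ℤ)) ((k:ℤ)-1)).image (fun m => X ^ m) with hA
    set B : Finset G := ((Finset.Icc 1 k) ×ˢ (Finset.Icc 1 k)).image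
      (fun p : ℕ × ℕ => X ^ (p.1:ℤ) * Y * (X ^ (p.2:ℤ))⁻¹) with hB
    set D : Finset G := ((Finset.Icc 1 k) ×ˢ (Finset.Icc 1 k)).image
      (fun p : ℕ × ℕ => X ^ (p.1:ℤ) * Y⁻¹ * (X ^ (p.2:ℤ))⁻¹) with hD
    have hmemC : ∀ i : ℕ, i ∈ Finset.Icc 1 k → X ^ i ∈
        ((Finset.Icc 1 k).image (fun i => X ^ i) ∪ (Finset.Icc 1 k).image (fun i => X ^ i * Y)) := by
      intro i hi
      exact Finset.mem_union_left _ (Finset.mem_image.2 ⟨i, hi, rfl⟩)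
    have hmemC' : ∀ i : ℕ, i ∈ Finset.Icc 1 k → X ^ i * Y ∈
        ((Finset.Icc 1 k).image (fun i => X ^ i) ∪ (Finset.Icc 1 k).image (fun i => X ^ i * Y)) := by
      intro i hi
      exact Finset.mem_union_right _ (Finset.mem_image.2 ⟨i, hi, rfl⟩)
    have key : ((Finset.Icc 1 k).image (fun i => X ^ i) ∪
        (Finset.Icc 1 k).image (fun i => X ^ i * Y)) *
        ((Finset.Icc 1 k).image (fun i => X ^ i) ∪
        (Finset.Icc 1 k).image (fun i => X ^ i * Y))⁻¹ = A ∪ B ∪ D := by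
      ext g
      constructor
      · intro hg
        obtain ⟨a, ha, b, hb, rfl⟩ := Finset.mem_mul.1 hg
        obtain ⟨c, hc, rfl⟩ := Finset.mem_inv.1 hb
        rcases Finset.mem_union.1 ha with ha | ha <;>
          rcases Finset.mem_union.1 hc with hc | hc <;>
          [obtain ⟨i, hi, rfl⟩ := Finset.mem_image.1 ha;
           obtain ⟨i, hi, rfl⟩ := Finset.mem_image.1 ha;
           obtain ⟨i, hi, rfl⟩ := Finset.mem_image.1 ha;
           obtain ⟨i, hi, rfl⟩ := Finset.mem_image.1 ha] <;>
          obtain ⟨j, hj, rfl⟩ := Finset.mem_image.1 hc <;>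
          simp only [Finset.mem_Icc] at hi hj
        · refine Finset.mem_union_left _ (Finset.mem_union_left _ (Finset.mem_image.2
            ⟨(i:ℤ) - j, Finset.mem_Icc.2 (by omega), ?_⟩))
          rw [zpow_sub, zpow_natCast, zpow_natCast]
        · refine Finset.mem_union_right _ (Finset.mem_image.2
            ⟨(i, j), Finset.mem_product.2 ⟨Finset.mem_Icc.2 hi, Finset.mem_Icc.2 hj⟩, ?_⟩)
          rw [zpow_natCast, zpow_natCast, mul_inv_rev, mul_assoc]
        · refine Finset.mem_union_left _ (Finset.mem_union_right _ (Finset.mem_image.2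
            ⟨(i, j), Finset.mem_product.2 ⟨Finset.mem_Icc.2 hi, Finset.mem_Icc.2 hj⟩, ?_⟩))
          rw [zpow_natCast, zpow_natCast]
        · refine Finset.mem_union_left _ (Finset.mem_union_left _ (Finset.mem_image.2
            ⟨(i:ℤ) - j, Finset.mem_Icc.2 (by omega), ?_⟩))
          rw [zpow_sub, zpow_natCast, zpow_natCast, mul_inv_rev]
          group
      · intro hg
        rcases Finset.mem_union.1 hg with hg | hg
        · rcases Finset.mem_union.1 hg with hg | hg
          · obtain ⟨m, hm, rfl⟩ := Finset.mem_image.1 hg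
            rw [Finset.mem_Icc] at hm
            refine Finset.mem_mul.2 ⟨X ^ ((max m 0).toNat + 1), hmemC _ (Finset.mem_Icc.2 (by omega)),
              (X ^ ((max (-m) 0).toNat + 1))⁻¹,
              Finset.mem_inv.2 ⟨_, hmemC _ (Finset.mem_Icc.2 (by omega)), rfl⟩, ?_⟩
            rw [← zpow_natCast X ((max m 0).toNat + 1), ← zpow_natCast X ((max (-m) 0).toNat + 1),
              ← zpow_sub]
            congr 1
            omega
          · obtain ⟨⟨a, b⟩, hab, rfl⟩ := Finset.mem_image.1 hg
            obtain ⟨ha, hb⟩ := Finset.mem_product.1 hab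
            refine Finset.mem_mul.2 ⟨X ^ a * Y, hmemC' _ ha, (X ^ b)⁻¹,
              Finset.mem_inv.2 ⟨_, hmemC _ hb, rfl⟩, ?_⟩
            rw [zpow_natCast, zpow_natCast]
        · obtain ⟨⟨a, b⟩, hab, rfl⟩ := Finset.mem_image.1 hg
          obtain ⟨ha, hb⟩ := Finset.mem_product.1 hab
          refine Finset.mem_mul.2 ⟨X ^ a, hmemC _ ha, (X ^ b * Y)⁻¹,
            Finset.mem_inv.2 ⟨_, hmemC' _ hb, rfl⟩, ?_⟩
          rw [zpow_natCast, zpow_natCast, mul_inv_rev, mul_assoc]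
    rw [key]
    have hAB : Disjoint A B := by
      rw [Finset.disjoint_left]
      rintro g hg1 hg2
      obtain ⟨m, _, rfl⟩ := Finset.mem_image.1 hg1
      obtain ⟨p, _, hp⟩ := Finset.mem_image.1 hg2
      exact A_ne_B hp.symm
    have hABD : Disjoint (A ∪ B) D := by
      rw [Finset.disjoint_left]
      rintro g hg1 hg2
      obtain ⟨p, _, rfl⟩ := Finset.mem_image.1 hg2
      rcases Finset.mem_union.1 hg1 with hg | hg
      · obtain ⟨m, _, hm⟩ := Finset.mem_image.1 hg
        exact A_ne_D hm
      · obtain ⟨q, _, hq⟩ := Finset.mem_image.1 hg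
        exact B_ne_D hq
    rw [Finset.card_union_of_disjoint hABD, Finset.card_union_of_disjoint hAB]
    have cA : A.card = 2 * k - 1 := by
      rw [hA, Finset.card_image_of_injOn (fun m _ n _ h => zpow_inj h), Int.card_Icc]
      omega
    have cB : B.card = k * k := by
      rw [hB, Finset.card_image_of_injOn, Finset.card_product, Nat.card_Icc]
      · norm_num
      · rintro ⟨a, b⟩ _ ⟨c, d⟩ _ h
        obtain ⟨h1, h2⟩ := conj_inj h
        simp only [Prod.mk.injEq]
        exact ⟨by exact_mod_cast h1, by exact_mod_cast h2⟩
    have cD : D.card = k * k := by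
      rw [hD, Finset.card_image_of_injOn, Finset.card_product, Nat.card_Icc]
      · norm_num
      · rintro ⟨a, b⟩ _ ⟨c, d⟩ _ h
        obtain ⟨h1, h2⟩ := conj_inj' h
        simp only [Prod.mk.injEq]
        exact ⟨by exact_mod_cast h1, by exact_mod_cast h2⟩
    rw [cA, cB, cD, pow_two]
    generalize k * k = n
    omega
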